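/- Let E be a separable Banach space and (X_i)_{i ≥ 1} a sequence of independent random elements of E on a probability space (Ω,F,P), each X_i being Bochner integrable on bounded truncations. Let (a_n)_{n ≥ 1} be positive reals. Assume condition (AN): for every δ > 0 and T > 0, lim_{ε ↓ 0} limsup_{n → ∞} max_{1 ≤ k ≤ ⌊nT⌋} P( ‖ Σ_{i=1}^{k} ( X_i 1_{{‖X_i‖ ≤ a_n ε}} − E[ X_i 1_{{‖X_i‖ ≤ a_n ε}} ] ) ‖ > a_n δ ) = 0. Then the corresponding maximal version holds: for every δ > 0 and T > 0, lim_{ε ↓ 0} limsup_{n → ∞} P( max_{1 ≤ k ≤ ⌊nT⌋} ‖ Σ_{i=1}^{k} ( X_i 1_{{‖X_i‖ ≤ a_n ε}} − E[ X_i 1_{{‖X_i‖ ≤ a_n ε}} ] ) ‖ > a_n δ ) = 0. -/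

import Mathlib

open MeasureTheory ProbabilityTheory Filter Set Topology

lemma etemadi_aux
    {E : Type*} [NormedAddCommGroup E] [MeasurableSpace E] [BorelSpace E]
    [SecondCountableTopology E]
    {Ω : Type*} [MeasurableSpace Ω] (P : Measure Ω) [IsProbabilityMeasure P]
    (Y : ℕ → Ω → E) (hmeas : ∀ i, Measurable (Y i))
    (hind : iIndepFun Y P)
    (N : ℕ) (t u : ℝ) (ht : 0 < t) (htu : 3 * t ≤ u) :
    P {ω | ∃ k : ℕ, 1 ≤ k ∧ k ≤ N ∧ u < ‖∑ i ∈ Finset.range k, Y i ω‖}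
      ≤ 3 * (Finset.Icc 1 N).sup
          (fun k => P {ω | t < ‖∑ i ∈ Finset.range k, Y i ω‖}) := by
  classical
  rcases Nat.eq_zero_or_pos N with hN0 | hN1
  · subst hN0
    have : {ω : Ω | ∃ k : ℕ, 1 ≤ k ∧ k ≤ 0 ∧ u < ‖∑ i ∈ Finset.range k, Y i ω‖} = ∅ := by
      ext ω; simp only [Set.mem_setOf_eq, Set.mem_empty_iff_false, iff_false, not_exists]
      intro k hk; omega
    rw [this]
    simp
  set S : ℕ → Ω → E := fun k ω => ∑ i ∈ Finset.range k, Y i ω with hS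
  have hSmeas : ∀ k, Measurable (S k) := fun k =>
    Finset.measurable_sum _ (fun i _ => hmeas i)
  set M := (Finset.Icc 1 N).sup (fun k => P {ω | t < ‖S k ω‖}) with hMdef
  have hM : ∀ k ∈ Finset.Icc 1 N, P {ω | t < ‖S k ω‖} ≤ M :=
    fun k hk => Finset.le_sup (f := fun k => P {ω | t < ‖S k ω‖}) hk
  -- first-entry events
  set B : ℕ → Set Ω := fun k =>
    {ω | (∀ j, 1 ≤ j → j < k → ‖S j ω‖ ≤ u) ∧ u < ‖S k ω‖} with hBdef
  set A : Set Ω := {ω | t < ‖S N ω‖} with hAdef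
  set D : ℕ → Set Ω := fun k => {ω | 2 * t < ‖S N ω - S k ω‖} with hDdef
  have hAmeas : MeasurableSet A := measurableSet_lt measurable_const (hSmeas N).norm
  have hBmeas : ∀ k, MeasurableSet (B k) := by
    intro k
    have : B k = (⋂ j ∈ Finset.Ico 1 k, {ω | ‖S j ω‖ ≤ u}) ∩ {ω | u < ‖S k ω‖} := by
      ext ω
      simp only [hBdef, Set.mem_setOf_eq, Set.mem_inter_iff, Set.mem_iInter,
        Finset.mem_Ico, and_congr_left_iff]
      exact fun _ => ⟨fun h j hj => h j hj.1 hj.2, fun h j h1 h2 => h j ⟨h1, h2⟩⟩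
    rw [this]
    exact (MeasurableSet.biInter (Finset.Ico 1 k).countable_toSet
      (fun j _ => measurableSet_le (hSmeas j).norm measurable_const)).inter
      (measurableSet_lt measurable_const (hSmeas k).norm)
  have hDmeas : ∀ k, MeasurableSet (D k) :=
    fun k => measurableSet_lt measurable_const ((hSmeas N).sub (hSmeas k)).norm
  -- pairwise disjointness of the B k
  have hBdisj : PairwiseDisjoint (↑(Finset.Icc 1 N)) B := by
    intro k hk l hl hkl
    simp only [Finset.coe_Icc, Set.mem_Icc] at hk hl
    rcases lt_or_gt_of_ne hkl with h | h
    · exact Set.disjoint_left.mpr fun ω hωk hωl =>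
        absurd (hωl.1 k hk.1 h) (not_le.mpr hωk.2)
    · exact Set.disjoint_left.mpr fun ω hωk hωl =>
        absurd (hωk.1 l hl.1 h) (not_le.mpr hωl.2)
  -- the target set is the disjoint union of the B k
  have hUnion : {ω | ∃ k : ℕ, 1 ≤ k ∧ k ≤ N ∧ u < ‖S k ω‖}
      = ⋃ k ∈ Finset.Icc 1 N, B k := by
    ext ω
    simp only [Set.mem_setOf_eq, Set.mem_iUnion, Finset.mem_Icc, exists_prop]
    constructor
    · intro h
      have hex : ∃ k, 1 ≤ k ∧ k ≤ N ∧ u < ‖S k ω‖ := h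
      set k₀ := Nat.find hex with hk₀
      have hspec := Nat.find_spec hex
      refine ⟨k₀, ⟨hspec.1, hspec.2.1⟩, ?_, hspec.2.2⟩
      intro j hj1 hjlt
      by_contra hcon
      exact Nat.find_min hex hjlt ⟨hj1, le_trans (le_of_lt hjlt) hspec.2.1,
        not_le.mp hcon⟩
    · rintro ⟨k, ⟨hk1, hkN⟩, _, hgt⟩
      exact ⟨k, hk1, hkN, hgt⟩
  -- independence of B k and D k
  have hIndepBD : ∀ k, k ≤ N → P (B k ∩ D k) = P (B k) * P (D k) := by
    intro k hkN
    set mF : MeasurableSpace Ω :=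
      ⨆ i ∈ (↑(Finset.range k) : Set ℕ), MeasurableSpace.comap (Y i) inferInstance with hmF
    have hYF : ∀ i ∈ Finset.range k, Measurable[mF] (Y i) := by
      intro i hi
      exact Measurable.of_comap_le (le_iSup₂ (f := fun i (_ : i ∈ (↑(Finset.range k) : Set ℕ)) =>
        MeasurableSpace.comap (Y i) inferInstance) i (by exact_mod_cast hi))
    have hSF : ∀ j, j ≤ k → Measurable[mF] (S j) := by
      intro j hj
      apply Finset.measurable_sum
      intro i hi
      exact hYF i (Finset.mem_range.mpr (lt_of_lt_of_le (Finset.mem_range.mp hi) hj))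
    have hBF : MeasurableSet[mF] (B k) := by
      have : B k = (⋂ j ∈ Finset.Ico 1 k, {ω | ‖S j ω‖ ≤ u}) ∩ {ω | u < ‖S k ω‖} := by
        ext ω
        simp only [hBdef, Set.mem_setOf_eq, Set.mem_inter_iff, Set.mem_iInter,
          Finset.mem_Ico, and_congr_left_iff]
        exact fun _ => ⟨fun h j hj => h j hj.1 hj.2, fun h j h1 h2 => h j ⟨h1, h2⟩⟩
      rw [this]
      exact MeasurableSet.inter
        (MeasurableSet.biInter (Finset.Ico 1 k).countable_toSet
          (fun j hj => measurableSet_le (Measurable.norm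
            (hSF j (le_of_lt (Finset.mem_Ico.mp hj).2))) measurable_const))
        (measurableSet_lt measurable_const (Measurable.norm (hSF k le_rfl)))
    set mG : MeasurableSpace Ω :=
      ⨆ i ∈ (↑(Finset.Ico k N) : Set ℕ), MeasurableSpace.comap (Y i) inferInstance with hmG
    have hYG : ∀ i ∈ Finset.Ico k N, Measurable[mG] (Y i) := by
      intro i hi
      exact Measurable.of_comap_le (le_iSup₂ (f := fun i (_ : i ∈ (↑(Finset.Ico k N) : Set ℕ)) =>
        MeasurableSpace.comap (Y i) inferInstance) i (by exact_mod_cast hi))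
    have hDG : MeasurableSet[mG] (D k) := by
      have hdiff : ∀ ω, S N ω - S k ω = ∑ i ∈ Finset.Ico k N, Y i ω := by
        intro ω
        rw [hS]
        exact (Finset.sum_Ico_eq_sub (fun i => Y i ω) hkN).symm
      have : D k = {ω | 2 * t < ‖∑ i ∈ Finset.Ico k N, Y i ω‖} := by
        ext ω; simp only [hDdef, Set.mem_setOf_eq, hdiff ω]
      rw [this]
      exact measurableSet_lt measurable_const
        (Measurable.norm (Finset.measurable_sum _ (fun i hi => hYG i hi)))
    have hdisj : Disjoint (↑(Finset.range k) : Set ℕ) (↑(Finset.Ico k N) : Set ℕ) := by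
      rw [Set.disjoint_left]
      intro i hi1 hi2
      simp only [Finset.coe_range, Set.mem_Iio] at hi1
      simp only [Finset.coe_Ico, Set.mem_Ico] at hi2
      omega
    have hIndep : ProbabilityTheory.Indep mF mG P :=
      indep_iSup_of_disjoint (fun i => (hmeas i).comap_le) hind hdisj
    exact (ProbabilityTheory.Indep_iff mF mG P).mp hIndep (B k) (D k) hBF hDG
  -- bound P (D k) ≤ 2 * M
  have hDbound : ∀ k ∈ Finset.Icc 1 N, P (D k) ≤ 2 * M := by
    intro k hk
    have hk' := Finset.mem_Icc.mp hk
    have hNmem : N ∈ Finset.Icc 1 N := Finset.mem_Icc.mpr ⟨le_trans hk'.1 hk'.2, le_rfl⟩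
    have hsub : D k ⊆ A ∪ {ω | t < ‖S k ω‖} := by
      intro ω hω
      by_contra hcon
      simp only [Set.mem_union, Set.mem_setOf_eq, hAdef] at hcon
      push_neg at hcon
      have h1 : ‖S N ω‖ ≤ t := hcon.1
      have h2 : ‖S k ω‖ ≤ t := hcon.2
      have : ‖S N ω - S k ω‖ ≤ 2 * t := by
        calc ‖S N ω - S k ω‖ ≤ ‖S N ω‖ + ‖S k ω‖ := norm_sub_le _ _
        _ ≤ 2 * t := by linarith
      exact absurd hω (not_lt.mpr this)
    calc P (D k) ≤ P A + P {ω | t < ‖S k ω‖} :=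
        le_trans (measure_mono hsub) (measure_union_le _ _)
      _ ≤ M + M := add_le_add (hM N hNmem) (hM k hk)
      _ = 2 * M := (two_mul M).symm
  -- key inclusion: B k ⊆ (B k ∩ A) ∪ (B k ∩ D k)
  have hBsub : ∀ k, B k ⊆ (B k ∩ A) ∪ (B k ∩ D k) := by
    intro k ω hω
    by_cases hD : ω ∈ D k
    · exact Or.inr ⟨hω, hD⟩
    · left
      refine ⟨hω, ?_⟩
      simp only [hDdef, Set.mem_setOf_eq, not_lt] at hD
      have h1 : u < ‖S k ω‖ := hω.2
      have h2 : ‖S k ω‖ - ‖S N ω‖ ≤ ‖S N ω - S k ω‖ := by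
        rw [norm_sub_rev]; exact norm_sub_norm_le _ _
      simp only [hAdef, Set.mem_setOf_eq]
      linarith
  -- put everything together
  rw [hUnion, measure_biUnion_finset hBdisj (fun k _ => hBmeas k)]
  have step : ∀ k ∈ Finset.Icc 1 N, P (B k) ≤ P (B k ∩ A) + P (B k) * (2 * M) := by
    intro k hk
    have hk' := Finset.mem_Icc.mp hk
    calc P (B k) ≤ P ((B k ∩ A) ∪ (B k ∩ D k)) := measure_mono (hBsub k)
      _ ≤ P (B k ∩ A) + P (B k ∩ D k) := measure_union_le _ _
      _ = P (B k ∩ A) + P (B k) * P (D k) := by rw [hIndepBD k hk'.2]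
      _ ≤ P (B k ∩ A) + P (B k) * (2 * M) :=
          add_le_add le_rfl (mul_le_mul' le_rfl (hDbound k hk))
  calc ∑ k ∈ Finset.Icc 1 N, P (B k)
      ≤ ∑ k ∈ Finset.Icc 1 N, (P (B k ∩ A) + P (B k) * (2 * M)) :=
        Finset.sum_le_sum step
    _ = (∑ k ∈ Finset.Icc 1 N, P (B k ∩ A))
        + (∑ k ∈ Finset.Icc 1 N, P (B k)) * (2 * M) := by
        rw [Finset.sum_add_distrib, Finset.sum_mul]
    _ ≤ M + 1 * (2 * M) := by
        gcongr
        · -- sum of measures of disjoint subsets of A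
          have hd : PairwiseDisjoint (↑(Finset.Icc 1 N)) (fun k => B k ∩ A) :=
            hBdisj.mono_on (fun k _ => Set.inter_subset_left)
          rw [← measure_biUnion_finset hd (fun k _ => (hBmeas k).inter hAmeas)]
          refine le_trans (measure_mono ?_) (hM N
            (Finset.mem_Icc.mpr ?_))
          · exact Set.iUnion₂_subset (fun k _ => Set.inter_subset_right)
          · exact ⟨hN1, le_rfl⟩
        · rw [← measure_biUnion_finset hBdisj (fun k _ => hBmeas k)]
          exact prob_le_one
    _ = 3 * M := by ring

/-- Let `(Xᵢ)` be independent random elements of a separable Banach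
space `E` and `(aₙ)` positive reals. If condition (AN) holds, i.e. for all `δ, T > 0`,
`lim_{ε↓0} limsup_n max_{1 ≤ k ≤ ⌊nT⌋}
  P( ‖ Σ_{i=1}^k ( Xᵢ 1{‖Xᵢ‖ ≤ aₙ ε} − E[Xᵢ 1{‖Xᵢ‖ ≤ aₙ ε}] ) ‖ > aₙ δ ) = 0`,
then the maximal version holds: for all `δ, T > 0`,
`lim_{ε↓0} limsup_n
  P( max_{1 ≤ k ≤ ⌊nT⌋} ‖ Σ_{i=1}^k ( Xᵢ 1{‖Xᵢ‖ ≤ aₙ ε} − E[Xᵢ 1{‖Xᵢ‖ ≤ aₙ ε}] ) ‖ > aₙ δ ) = 0`. -/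
theorem maximal_asymptotic_negligibility
    {E : Type*} [NormedAddCommGroup E] [NormedSpace ℝ E] [CompleteSpace E]
    [TopologicalSpace.SeparableSpace E] [MeasurableSpace E] [BorelSpace E]
    {Ω : Type*} [MeasurableSpace Ω] (P : Measure Ω) [IsProbabilityMeasure P]
    (X : ℕ → Ω → E) (hXmeas : ∀ i, Measurable (X i))
    (hXindep : iIndepFun X P)
    (a : ℕ → ℝ) (ha_pos : ∀ n, 0 < a n)
    (hXint : ∀ (n : ℕ) (ε : ℝ) (i : ℕ),
      Integrable (fun ω => if ‖X i ω‖ ≤ a n * ε then X i ω else 0) P)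
    (hAN : ∀ δ : ℝ, 0 < δ → ∀ T : ℝ, 0 < T →
      Tendsto (fun ε : ℝ =>
          Filter.limsup (fun n : ℕ =>
            (Finset.Icc 1 (Nat.floor ((n : ℝ) * T))).sup (fun k =>
              P {ω | a n * δ < ‖∑ i ∈ Finset.range k,
                ((if ‖X i ω‖ ≤ a n * ε then X i ω else 0)
                  - ∫ ω', (if ‖X i ω'‖ ≤ a n * ε then X i ω' else 0) ∂P)‖})) atTop)
        (nhdsWithin 0 (Set.Ioi 0)) (nhds 0)) :
    ∀ δ : ℝ, 0 < δ → ∀ T : ℝ, 0 < T →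
      Tendsto (fun ε : ℝ =>
          Filter.limsup (fun n : ℕ =>
            P {ω | ∃ k : ℕ, 1 ≤ k ∧ k ≤ Nat.floor ((n : ℝ) * T) ∧
              a n * δ < ‖∑ i ∈ Finset.range k,
                ((if ‖X i ω‖ ≤ a n * ε then X i ω else 0)
                  - ∫ ω', (if ‖X i ω'‖ ≤ a n * ε then X i ω' else 0) ∂P)‖}) atTop)
        (nhdsWithin 0 (Set.Ioi 0)) (nhds 0) := by
  classical
  intro δ hδ T hT
  haveI : SecondCountableTopology E := UniformSpace.secondCountable_of_separable E
  have key : ∀ (ε : ℝ) (n : ℕ),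
      P {ω | ∃ k : ℕ, 1 ≤ k ∧ k ≤ Nat.floor ((n : ℝ) * T) ∧
          a n * δ < ‖∑ i ∈ Finset.range k,
            ((if ‖X i ω‖ ≤ a n * ε then X i ω else 0)
              - ∫ ω', (if ‖X i ω'‖ ≤ a n * ε then X i ω' else 0) ∂P)‖}
        ≤ 3 * (Finset.Icc 1 (Nat.floor ((n : ℝ) * T))).sup (fun k =>
            P {ω | a n * (δ / 3) < ‖∑ i ∈ Finset.range k,
              ((if ‖X i ω‖ ≤ a n * ε then X i ω else 0)
                - ∫ ω', (if ‖X i ω'‖ ≤ a n * ε then X i ω' else 0) ∂P)‖}) := by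
    intro ε n
    set g : ℕ → E → E := fun i x => (if ‖x‖ ≤ a n * ε then x else 0)
      - ∫ ω', (if ‖X i ω'‖ ≤ a n * ε then X i ω' else 0) ∂P with hgdef
    have hg : ∀ i, Measurable (g i) := by
      intro i
      exact ((measurable_id.ite (measurableSet_le measurable_norm measurable_const)
        measurable_const).sub measurable_const)
    have hYmeas : ∀ i, Measurable (fun ω =>
        (if ‖X i ω‖ ≤ a n * ε then X i ω else 0)
          - ∫ ω', (if ‖X i ω'‖ ≤ a n * ε then X i ω' else 0) ∂P) :=
      fun i => (hg i).comp (hXmeas i)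
    have hYind : iIndepFun
        (fun i ω => (if ‖X i ω‖ ≤ a n * ε then X i ω else 0)
          - ∫ ω', (if ‖X i ω'‖ ≤ a n * ε then X i ω' else 0) ∂P) P :=
      hXindep.comp g hg
    have ht : 0 < a n * (δ / 3) := mul_pos (ha_pos n) (by linarith)
    have htu : 3 * (a n * (δ / 3)) ≤ a n * δ := le_of_eq (by ring)
    exact etemadi_aux P
      (fun i ω => (if ‖X i ω‖ ≤ a n * ε then X i ω else 0)
        - ∫ ω', (if ‖X i ω'‖ ≤ a n * ε then X i ω' else 0) ∂P)
      hYmeas hYind (Nat.floor ((n : ℝ) * T)) (a n * (δ / 3)) (a n * δ) ht htu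
  have hAN3 := hAN (δ / 3) (by linarith) T hT
  have hup : ∀ ε : ℝ,
      Filter.limsup (fun n : ℕ =>
        P {ω | ∃ k : ℕ, 1 ≤ k ∧ k ≤ Nat.floor ((n : ℝ) * T) ∧
          a n * δ < ‖∑ i ∈ Finset.range k,
            ((if ‖X i ω‖ ≤ a n * ε then X i ω else 0)
              - ∫ ω', (if ‖X i ω'‖ ≤ a n * ε then X i ω' else 0) ∂P)‖}) atTop
      ≤ 3 * Filter.limsup (fun n : ℕ =>
          (Finset.Icc 1 (Nat.floor ((n : ℝ) * T))).sup (fun k =>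
            P {ω | a n * (δ / 3) < ‖∑ i ∈ Finset.range k,
              ((if ‖X i ω‖ ≤ a n * ε then X i ω else 0)
                - ∫ ω', (if ‖X i ω'‖ ≤ a n * ε then X i ω' else 0) ∂P)‖})) atTop := by
    intro ε
    refine le_trans (Filter.limsup_le_limsup (Filter.Eventually.of_forall (key ε))) ?_
    exact le_of_eq (ENNReal.limsup_const_mul_of_ne_top (by simp))
  have hlim : Tendsto (fun ε : ℝ => 3 * Filter.limsup (fun n : ℕ =>
      (Finset.Icc 1 (Nat.floor ((n : ℝ) * T))).sup (fun k =>
        P {ω | a n * (δ / 3) < ‖∑ i ∈ Finset.range k,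
          ((if ‖X i ω‖ ≤ a n * ε then X i ω else 0)
            - ∫ ω', (if ‖X i ω'‖ ≤ a n * ε then X i ω' else 0) ∂P)‖})) atTop)
      (nhdsWithin 0 (Set.Ioi 0)) (nhds 0) := by
    have := ENNReal.Tendsto.const_mul (a := (3 : ENNReal)) hAN3 (Or.inr (by simp))
    simpa using this
  exact tendsto_of_tendsto_of_tendsto_of_le_of_le tendsto_const_nhds hlim
    (fun ε => zero_le) hup
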